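/- Let F : ℝ → ℝ be twice continuously differentiable with bounded first and second derivatives, let σ₀, A ∈ ℝ, let γ ≥ 0, and let μ be the standard Gaussian measure N(0,1) on ℝ. Then, as ε → 0 from the right, ∫ (F(σ₀ + ε·A + √(ε·γ)·y) − F(σ₀))² dμ(y) − ε·(F′(σ₀))²·γ = o(ε); that is, the quadratic error of F(σ) for the perturbed parameter σ = σ₀ + εA + √(εγ)·Y equals ε·(F′(σ₀))²·γ up to o(ε). -/

import Mathlib

open MeasureTheory ProbabilityTheory Filter Asymptotics
open Real
open scoped NNReal ENNReal

lemma pdf_eq (y : ℝ) :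
    gaussianPDFReal 0 1 y = (√(2*π))⁻¹ * rexp (-(1/2) * y ^ 2) := by
  simp only [gaussianPDFReal, NNReal.coe_one, mul_one, sub_zero]
  ring_nf

lemma transfer (g : ℝ → ℝ) :
    ∫ y, g y ∂(gaussianReal 0 1) = ∫ y, gaussianPDFReal 0 1 y * g y := by
  rw [gaussianReal_of_var_ne_zero _ one_ne_zero]
  have : (gaussianPDF 0 1) = fun y => ((fun y => (gaussianPDFReal 0 1 y).toNNReal) y : ℝ≥0∞) := rfl
  rw [this, integral_withDensity_eq_integral_smul
    ((measurable_gaussianPDFReal 0 1).real_toNNReal)]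
  congr 1; funext y
  simp [NNReal.smul_def, Real.coe_toNNReal _ (gaussianPDFReal_nonneg 0 1 y)]

lemma transfer_int (g : ℝ → ℝ) :
    Integrable g (gaussianReal 0 1) ↔ Integrable (fun y => gaussianPDFReal 0 1 y * g y) := by
  rw [gaussianReal_of_var_ne_zero _ one_ne_zero]
  have : (gaussianPDF 0 1) = fun y => ((fun y => (gaussianPDFReal 0 1 y).toNNReal) y : ℝ≥0∞) := rfl
  rw [this, integrable_withDensity_iff_integrable_smul
    ((measurable_gaussianPDFReal 0 1).real_toNNReal)]
  apply integrable_congr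
  filter_upwards with y
  simp [NNReal.smul_def, Real.coe_toNNReal _ (gaussianPDFReal_nonneg 0 1 y)]

-- integrability of x^n * exp(-(1/2)x^2) over volume
lemma int_pow_exp (n : ℕ) : Integrable (fun x : ℝ => x ^ n * rexp (-(1/2) * x ^ 2)) := by
  have h := integrable_rpow_mul_exp_neg_mul_sq (b := 1/2) (by norm_num) (s := (n:ℝ))
    (lt_of_lt_of_le neg_one_lt_zero (Nat.cast_nonneg n))
  simpa [Real.rpow_natCast] using h

lemma int_abs_cube_exp : Integrable (fun x : ℝ => |x| ^ 3 * rexp (-(1/2) * x ^ 2)) := by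
  have h := (int_pow_exp 3).abs
  apply h.congr
  filter_upwards with x
  rw [abs_mul, abs_of_nonneg (exp_pos _).le, abs_pow]

-- second moment over volume
lemma sq_moment_vol : ∫ x : ℝ, x ^ 2 * rexp (-(1/2) * x ^ 2) = √(2*π) := by
  have h := integral_comp_abs (f := fun t : ℝ => t ^ 2 * rexp (-(1/2) * t ^ 2))
  simp only [sq_abs] at h
  rw [h]
  have h2 : ∀ x ∈ Set.Ioi (0:ℝ), x ^ 2 * rexp (-(1/2) * x ^ 2)
      = x ^ (2:ℝ) * rexp (-(1/2) * x ^ (2:ℝ)) := by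
    intro x _
    rw [show ((2:ℝ)) = ((2:ℕ):ℝ) by norm_num, Real.rpow_natCast]
  rw [setIntegral_congr_fun measurableSet_Ioi h2]
  rw [integral_rpow_mul_exp_neg_mul_rpow (by norm_num) (by norm_num) (by norm_num)]
  rw [show (-(2+1)/2 : ℝ) = -(3/2 : ℝ) by norm_num,
    show ((2+1)/2 : ℝ) = 1/2 + 1 by norm_num,
    Real.Gamma_add_one (by norm_num), Real.Gamma_one_half_eq]
  have e : ((1/2:ℝ)) ^ (-(3/2):ℝ) = (2:ℝ) ^ ((3/2):ℝ) := by
    rw [one_div, ← Real.rpow_neg_one (2:ℝ), ← Real.rpow_mul (by norm_num)]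
    norm_num
  have e2 : (2:ℝ) ^ ((3/2):ℝ) = 2 * √2 := by
    rw [show (3/2:ℝ) = 1 + 1/2 by norm_num, Real.rpow_add (by norm_num), Real.rpow_one,
      ← Real.sqrt_eq_rpow]
  rw [e, e2, Real.sqrt_mul (by norm_num)]
  have h2 : (0:ℝ) < √2 := by positivity
  have hπ : (0:ℝ) ≤ π := Real.pi_pos.le
  nlinarith [Real.sq_sqrt (by norm_num : (0:ℝ) ≤ 2), Real.sqrt_nonneg π]

lemma integrable_pow_gm (n : ℕ) : Integrable (fun y : ℝ => y ^ n) (gaussianReal 0 1) := by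
  rw [transfer_int]
  have h := (int_pow_exp n).const_mul (√(2*π))⁻¹
  apply h.congr
  filter_upwards with y
  rw [pdf_eq]; ring

lemma integrable_abs_cube_gm : Integrable (fun y : ℝ => |y| ^ 3) (gaussianReal 0 1) := by
  rw [transfer_int]
  have h := int_abs_cube_exp.const_mul (√(2*π))⁻¹
  apply h.congr
  filter_upwards with y
  rw [pdf_eq]; ring

lemma integral_id_gm : ∫ y, y ∂(gaussianReal 0 1) = 0 := by
  rw [transfer]
  have key : ∫ y : ℝ, (fun y => gaussianPDFReal 0 1 y * y) (-y)
      = ∫ y : ℝ, gaussianPDFReal 0 1 y * y := integral_neg_eq_self (fun y => gaussianPDFReal 0 1 y * y) volume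
  have odd : ∀ y : ℝ, (fun y => gaussianPDFReal 0 1 y * y) (-y)
      = -(gaussianPDFReal 0 1 y * y) := by
    intro y
    simp only [pdf_eq, neg_sq]
    ring
  simp only [odd] at key
  rw [integral_neg] at key
  linarith

lemma integral_sq_gm : ∫ y, y ^ 2 ∂(gaussianReal 0 1) = 1 := by
  rw [transfer]
  have : (fun y : ℝ => gaussianPDFReal 0 1 y * y ^ 2)
      = fun y => (√(2*π))⁻¹ * (y ^ 2 * rexp (-(1/2) * y ^ 2)) := by
    funext y; rw [pdf_eq]; ring
  rw [this, integral_const_mul, sq_moment_vol, inv_mul_cancel₀]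
  positivity

lemma lip_of_deriv_bound {f : ℝ → ℝ} {C : ℝ} (hf : Differentiable ℝ f)
    (hC : ∀ x, |deriv f x| ≤ C) (a b : ℝ) : |f b - f a| ≤ C * |b - a| := by
  have := Convex.norm_image_sub_le_of_norm_deriv_le (s := Set.univ)
    (fun x _ => hf.differentiableAt) (fun x _ => hC x) convex_univ
    (Set.mem_univ a) (Set.mem_univ b)
  simpa [Real.norm_eq_abs] using this

lemma taylor_bound {F : ℝ → ℝ} (hdF : Differentiable ℝ F) {C₂ : ℝ}
    (hC2 : ∀ x, |deriv (deriv F) x| ≤ C₂) (hdF' : Differentiable ℝ (deriv F))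
    (σ₀ h : ℝ) : |F (σ₀ + h) - F σ₀ - deriv F σ₀ * h| ≤ C₂ * h ^ 2 := by
  have hC2nn : 0 ≤ C₂ := le_trans (abs_nonneg _) (hC2 0)
  set G : ℝ → ℝ := fun x => F x - deriv F σ₀ * x with hG
  have hGdiff : ∀ x, DifferentiableAt ℝ G x := fun x =>
    (hdF x).sub ((differentiableAt_id.const_mul _))
  have hGd : ∀ x, deriv G x = deriv F x - deriv F σ₀ := by
    intro x
    have h1 : HasDerivAt G (deriv F x - deriv F σ₀ * 1) x :=
      ((hdF x).hasDerivAt).sub ((hasDerivAt_id x).const_mul (deriv F σ₀))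
    simpa using h1.deriv
  have lipF' := lip_of_deriv_bound hdF' hC2
  have bound : ∀ x ∈ Set.uIcc σ₀ (σ₀ + h), ‖deriv G x‖ ≤ C₂ * |h| := by
    intro x hx
    rw [Real.norm_eq_abs, hGd]
    calc |deriv F x - deriv F σ₀| ≤ C₂ * |x - σ₀| := lipF' σ₀ x
      _ ≤ C₂ * |h| := by
          refine mul_le_mul_of_nonneg_left ?_ hC2nn
          simpa using Set.abs_sub_left_of_mem_uIcc hx
  have key := Convex.norm_image_sub_le_of_norm_deriv_le (s := Set.uIcc σ₀ (σ₀ + h))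
    (fun x _ => hGdiff x) bound (convex_uIcc _ _) Set.left_mem_uIcc Set.right_mem_uIcc
  have e1 : G (σ₀ + h) - G σ₀ = F (σ₀ + h) - F σ₀ - deriv F σ₀ * h := by
    simp only [hG]; ring
  rw [e1, Real.norm_eq_abs, Real.norm_eq_abs, add_sub_cancel_left] at key
  calc |F (σ₀ + h) - F σ₀ - deriv F σ₀ * h| ≤ C₂ * |h| * |h| := key
    _ = C₂ * h ^ 2 := by rw [mul_assoc, abs_mul_abs_self]; ring

lemma key_pointwise {F : ℝ → ℝ} {C₁ C₂ : ℝ} (hdF : Differentiable ℝ F)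
    (hC1 : ∀ x, |deriv F x| ≤ C₁) (hC2 : ∀ x, |deriv (deriv F) x| ≤ C₂)
    (hdF' : Differentiable ℝ (deriv F)) (σ₀ h : ℝ) :
    |(F (σ₀ + h) - F σ₀) ^ 2 - (deriv F σ₀) ^ 2 * h ^ 2| ≤ 2 * C₁ * C₂ * |h| ^ 3 := by
  have hC1nn : 0 ≤ C₁ := le_trans (abs_nonneg _) (hC1 0)
  have hC2nn : 0 ≤ C₂ := le_trans (abs_nonneg _) (hC2 0)
  have t := taylor_bound hdF hC2 hdF' σ₀ h
  have l : |F (σ₀ + h) - F σ₀| ≤ C₁ * |h| := by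
    simpa using lip_of_deriv_bound hdF hC1 σ₀ (σ₀ + h)
  have hb : |deriv F σ₀ * h| ≤ C₁ * |h| := by
    rw [abs_mul]
    exact mul_le_mul_of_nonneg_right (hC1 σ₀) (abs_nonneg h)
  set a := F (σ₀ + h) - F σ₀ with ha
  have e : a ^ 2 - (deriv F σ₀) ^ 2 * h ^ 2 = (a - deriv F σ₀ * h) * (a + deriv F σ₀ * h) := by
    ring
  rw [e, abs_mul]
  have h2 : |a + deriv F σ₀ * h| ≤ 2 * (C₁ * |h|) := by
    calc |a + deriv F σ₀ * h| ≤ |a| + |deriv F σ₀ * h| := abs_add_le _ _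
      _ ≤ 2 * (C₁ * |h|) := by linarith
  calc |a - deriv F σ₀ * h| * |a + deriv F σ₀ * h| ≤ (C₂ * h ^ 2) * (2 * (C₁ * |h|)) := by
        refine mul_le_mul t h2 (abs_nonneg _) (by positivity)
    _ = 2 * C₁ * C₂ * |h| ^ 3 := by rw [← sq_abs h]; ring

lemma integrable_id_gm : Integrable (fun y : ℝ => y) (gaussianReal 0 1) := by
  have h := integrable_pow_gm 1
  simpa using h

/-- Quadratic error of `F(σ)` for the perturbed parameter `σ = σ₀ + εA + √(εγ)·Y`,
`Y` standard Gaussian, equals `ε·(F′(σ₀))²·γ` up to `o(ε)` as `ε → 0⁺`. -/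
theorem quadratic_error_of_perturbed_parameter
    (F : ℝ → ℝ) (hF : ContDiff ℝ 2 F)
    (hF1 : ∃ C, ∀ x, |deriv F x| ≤ C)
    (hF2 : ∃ C, ∀ x, |deriv (deriv F) x| ≤ C)
    (σ₀ A γ : ℝ) (hγ : 0 ≤ γ) :
    (fun ε : ℝ =>
        (∫ y, (F (σ₀ + ε * A + Real.sqrt (ε * γ) * y) - F σ₀) ^ 2 ∂(gaussianReal 0 1))
          - ε * (deriv F σ₀) ^ 2 * γ)
      =o[nhdsWithin 0 (Set.Ioi 0)] (fun ε : ℝ => ε) := by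
  obtain ⟨C₁', hC₁'⟩ := hF1
  obtain ⟨C₂', hC₂'⟩ := hF2
  set C₁ := max C₁' 0 with hC₁def
  set C₂ := max C₂' 0 with hC₂def
  have hC1 : ∀ x, |deriv F x| ≤ C₁ := fun x => le_trans (hC₁' x) (le_max_left _ _)
  have hC2 : ∀ x, |deriv (deriv F) x| ≤ C₂ := fun x => le_trans (hC₂' x) (le_max_left _ _)
  have hC1nn : 0 ≤ C₁ := le_max_right _ _
  have hC2nn : 0 ≤ C₂ := le_max_right _ _
  clear_value C₁ C₂
  clear hC₁' hC₂' hC₁def hC₂def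
  have hdF : Differentiable ℝ F := hF.differentiable (by norm_num)
  have hdF' : Differentiable ℝ (deriv F) := by
    have h2 : ContDiff ℝ (1 + 1) F := by simpa [one_add_one_eq_two] using hF
    exact (contDiff_succ_iff_deriv.mp h2).2.2.differentiable one_ne_zero
  set F'₀ := deriv F σ₀ with hF'₀
  set M₃ := ∫ y, |y| ^ 3 ∂(gaussianReal 0 1) with hM₃
  have hM₃nn : 0 ≤ M₃ := integral_nonneg (fun y => by positivity)
  have hc12 : 0 ≤ 2 * C₁ * C₂ := by
    have := mul_nonneg hC1nn hC2nn; linarith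
  -- key ε-level bound
  have key_eps : ∀ ε : ℝ, 0 < ε →
      |(∫ y, (F (σ₀ + ε * A + Real.sqrt (ε * γ) * y) - F σ₀) ^ 2 ∂(gaussianReal 0 1))
          - ε * F'₀ ^ 2 * γ|
        ≤ F'₀ ^ 2 * ε ^ 2 * A ^ 2
          + (8 * C₁ * C₂ * |ε * A| ^ 3 + 8 * C₁ * C₂ * (Real.sqrt (ε * γ)) ^ 3 * M₃) := by
    intro ε hε
    set s := Real.sqrt (ε * γ) with hs_def
    have hs : 0 ≤ s := Real.sqrt_nonneg _
    have hs2 : s ^ 2 = ε * γ := Real.sq_sqrt (by positivity)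
    clear_value s
    set h : ℝ → ℝ := fun y => ε * A + s * y with hh
    have harg : ∀ y, σ₀ + ε * A + s * y = σ₀ + h y := fun y => by rw [hh]; ring
    -- integrability of quadratic polynomials
    have iquad : ∀ c₂ c₁ c₀ : ℝ, Integrable (fun y : ℝ => c₂ * y ^ 2 + (c₁ * y + c₀))
        (gaussianReal 0 1) :=
      fun c₂ c₁ c₀ => ((integrable_pow_gm 2).const_mul c₂).add
        ((integrable_id_gm.const_mul c₁).add (integrable_const c₀))
    have i2 : Integrable (fun y => (h y) ^ 2) (gaussianReal 0 1) := by
      refine (iquad (s ^ 2) (2 * ε * A * s) ((ε * A) ^ 2)).congr ?_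
      filter_upwards with y
      rw [hh]; ring
    have contin : Continuous (fun y : ℝ => (F (σ₀ + h y) - F σ₀) ^ 2) := by
      have hhc : Continuous h := by rw [hh]; continuity
      exact ((hF.continuous.comp (continuous_const.add hhc)).sub continuous_const).pow 2
    have iF : Integrable (fun y => (F (σ₀ + h y) - F σ₀) ^ 2) (gaussianReal 0 1) := by
      refine Integrable.mono' ((i2.const_mul (C₁ ^ 2))) contin.aestronglyMeasurable ?_
      filter_upwards with y
      rw [Real.norm_eq_abs, abs_of_nonneg (sq_nonneg _)]
      have l : |F (σ₀ + h y) - F σ₀| ≤ C₁ * |h y| := by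
        simpa using lip_of_deriv_bound hdF hC1 σ₀ (σ₀ + h y)
      calc (F (σ₀ + h y) - F σ₀) ^ 2 = |F (σ₀ + h y) - F σ₀| ^ 2 := (sq_abs _).symm
        _ ≤ (C₁ * |h y|) ^ 2 := pow_le_pow_left₀ (abs_nonneg _) l 2
        _ = C₁ ^ 2 * (h y) ^ 2 := by rw [mul_pow, sq_abs]
    set u : ℝ → ℝ := fun y => (F (σ₀ + h y) - F σ₀) ^ 2 - F'₀ ^ 2 * (h y) ^ 2 with hu
    have iu : Integrable u (gaussianReal 0 1) := iF.sub (i2.const_mul _)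
    have iv : Integrable (fun y : ℝ => 8 * C₁ * C₂ * |ε * A| ^ 3
        + (8 * C₁ * C₂ * s ^ 3) * |y| ^ 3) (gaussianReal 0 1) :=
      (integrable_const _).add (integrable_abs_cube_gm.const_mul _)
    -- pointwise bound on u
    have ubound : ∀ y : ℝ, |u y| ≤ 8 * C₁ * C₂ * |ε * A| ^ 3
        + (8 * C₁ * C₂ * s ^ 3) * |y| ^ 3 := by
      intro y
      have k := key_pointwise hdF hC1 hC2 hdF' σ₀ (h y)
      have habs : |h y| ≤ |ε * A| + s * |y| := by
        calc |h y| ≤ |ε * A| + |s * y| := abs_add_le _ _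
          _ = |ε * A| + s * |y| := by rw [abs_mul s y, abs_of_nonneg hs]
      have hcube : |h y| ^ 3 ≤ 4 * (|ε * A| ^ 3 + (s * |y|) ^ 3) := by
        have h1 : |h y| ^ 3 ≤ (|ε * A| + s * |y|) ^ 3 :=
          pow_le_pow_left₀ (abs_nonneg _) habs 3
        nlinarith [abs_nonneg (ε * A), mul_nonneg hs (abs_nonneg y),
          sq_nonneg (|ε * A| - s * |y|), sq_nonneg (|ε * A| + s * |y|)]
      calc |u y| ≤ 2 * C₁ * C₂ * |h y| ^ 3 := k
        _ ≤ 2 * C₁ * C₂ * (4 * (|ε * A| ^ 3 + (s * |y|) ^ 3)) :=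
            mul_le_mul_of_nonneg_left hcube hc12
        _ = 8 * C₁ * C₂ * |ε * A| ^ 3 + (8 * C₁ * C₂ * s ^ 3) * |y| ^ 3 := by ring
    -- second moment of h
    have hm : ∫ y, (h y) ^ 2 ∂(gaussianReal 0 1) = (ε * A) ^ 2 + s ^ 2 := by
      have e : (fun y : ℝ => (h y) ^ 2)
          = fun y => s ^ 2 * y ^ 2 + ((2 * ε * A * s) * y + (ε * A) ^ 2) := by
        funext y; rw [hh]; ring
      have ig1 : Integrable (fun y : ℝ => 2 * ε * A * s * y + (ε * A) ^ 2)
          (gaussianReal 0 1) := (integrable_id_gm.const_mul _).add (integrable_const _)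
      have ig2 : Integrable (fun y : ℝ => s ^ 2 * y ^ 2) (gaussianReal 0 1) :=
        (integrable_pow_gm 2).const_mul _
      have ig3 : Integrable (fun y : ℝ => 2 * ε * A * s * y) (gaussianReal 0 1) :=
        integrable_id_gm.const_mul _
      rw [e, integral_add ig2 ig1, integral_add ig3 (integrable_const _),
        integral_const_mul, integral_const_mul, integral_sq_gm, integral_id_gm, integral_const]
      simp [add_comm]
    -- splitting the integral
    have split : ∫ y, (F (σ₀ + ε * A + s * y) - F σ₀) ^ 2 ∂(gaussianReal 0 1)
        = (∫ y, u y ∂(gaussianReal 0 1)) + F'₀ ^ 2 * ((ε * A) ^ 2 + s ^ 2) := by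
      have e : (fun y : ℝ => (F (σ₀ + ε * A + s * y) - F σ₀) ^ 2)
          = fun y => u y + F'₀ ^ 2 * (h y) ^ 2 := by
        funext y; rw [hu]; simp only [harg y]; ring
      rw [e, integral_add iu (i2.const_mul _), integral_const_mul, hm]
    have intu_bound : |∫ y, u y ∂(gaussianReal 0 1)|
        ≤ 8 * C₁ * C₂ * |ε * A| ^ 3 + 8 * C₁ * C₂ * s ^ 3 * M₃ := by
      have hb := norm_integral_le_of_norm_le iv
        (Filter.Eventually.of_forall (fun y => by rw [Real.norm_eq_abs]; exact ubound y))
      rw [Real.norm_eq_abs] at hb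
      refine le_trans hb (le_of_eq ?_)
      rw [integral_add (integrable_const _) (integrable_abs_cube_gm.const_mul _),
        integral_const, integral_const_mul]
      simp [hM₃]
    rw [split]
    have hse : F'₀ ^ 2 * ((ε * A) ^ 2 + s ^ 2) - ε * F'₀ ^ 2 * γ = F'₀ ^ 2 * ε ^ 2 * A ^ 2 := by
      rw [hs2]; ring
    calc |(∫ y, u y ∂(gaussianReal 0 1)) + F'₀ ^ 2 * ((ε * A) ^ 2 + s ^ 2) - ε * F'₀ ^ 2 * γ|
        = |(∫ y, u y ∂(gaussianReal 0 1)) + F'₀ ^ 2 * ε ^ 2 * A ^ 2| := by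
          rw [add_sub_assoc, hse]
      _ ≤ |∫ y, u y ∂(gaussianReal 0 1)| + |F'₀ ^ 2 * ε ^ 2 * A ^ 2| := abs_add_le _ _
      _ ≤ F'₀ ^ 2 * ε ^ 2 * A ^ 2
          + (8 * C₁ * C₂ * |ε * A| ^ 3 + 8 * C₁ * C₂ * s ^ 3 * M₃) := by
          rw [abs_of_nonneg (show (0:ℝ) ≤ F'₀ ^ 2 * ε ^ 2 * A ^ 2 by positivity)]
          linarith [intu_bound]
  -- big-O with respect to ε √ε
  have bigO : (fun ε : ℝ =>
        (∫ y, (F (σ₀ + ε * A + Real.sqrt (ε * γ) * y) - F σ₀) ^ 2 ∂(gaussianReal 0 1))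
          - ε * F'₀ ^ 2 * γ)
      =O[nhdsWithin 0 (Set.Ioi 0)] (fun ε : ℝ => ε * Real.sqrt ε) := by
    set K := F'₀ ^ 2 * A ^ 2 + 8 * C₁ * C₂ * (|A| ^ 3 + γ * Real.sqrt γ * M₃) with hK
    refine Asymptotics.IsBigO.of_bound K ?_
    filter_upwards [Ioc_mem_nhdsGT one_pos] with ε hε
    obtain ⟨hε0, hε1⟩ := hε
    have hsq : Real.sqrt ε * Real.sqrt ε = ε := Real.mul_self_sqrt hε0.le
    have hsle : Real.sqrt ε ≤ 1 := by
      rw [show (1:ℝ) = Real.sqrt 1 by simp]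
      exact Real.sqrt_le_sqrt hε1
    have hεsqrt : ε ≤ Real.sqrt ε := by
      calc ε = Real.sqrt ε * Real.sqrt ε := hsq.symm
        _ ≤ Real.sqrt ε * 1 := mul_le_mul_of_nonneg_left hsle (Real.sqrt_nonneg ε)
        _ = Real.sqrt ε := mul_one _
    have h1 : ε ^ 2 ≤ ε * Real.sqrt ε := by
      calc ε ^ 2 = ε * ε := sq ε
        _ ≤ ε * Real.sqrt ε := mul_le_mul_of_nonneg_left hεsqrt hε0.le
    have h2 : ε ^ 3 ≤ ε * Real.sqrt ε := by
      have e3 : ε ^ 3 ≤ ε ^ 2 := pow_le_pow_of_le_one hε0.le hε1 (by norm_num)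
      exact le_trans e3 h1
    have h3 : (Real.sqrt (ε * γ)) ^ 3 = (ε * Real.sqrt ε) * (γ * Real.sqrt γ) := by
      rw [Real.sqrt_mul hε0.le]
      have e1 : Real.sqrt ε ^ 3 = ε * Real.sqrt ε := by rw [pow_succ, sq, hsq]
      have e2 : Real.sqrt γ ^ 3 = γ * Real.sqrt γ := by
        rw [pow_succ, sq, Real.mul_self_sqrt hγ]
      rw [mul_pow, e1, e2]
    have hεA : |ε * A| ^ 3 = ε ^ 3 * |A| ^ 3 := by
      rw [abs_mul, abs_of_pos hε0, mul_pow]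
    have hb := key_eps ε hε0
    rw [Real.norm_eq_abs, Real.norm_eq_abs,
      abs_of_nonneg (show (0:ℝ) ≤ ε * Real.sqrt ε by positivity)]
    have c8 : 0 ≤ 8 * C₁ * C₂ := by linarith
    have cA : 0 ≤ 8 * C₁ * C₂ * |A| ^ 3 :=
      mul_nonneg c8 (pow_nonneg (abs_nonneg A) 3)
    have t1 : F'₀ ^ 2 * ε ^ 2 * A ^ 2 ≤ F'₀ ^ 2 * A ^ 2 * (ε * Real.sqrt ε) := by
      calc F'₀ ^ 2 * ε ^ 2 * A ^ 2 = F'₀ ^ 2 * A ^ 2 * ε ^ 2 := by ring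
        _ ≤ F'₀ ^ 2 * A ^ 2 * (ε * Real.sqrt ε) :=
            mul_le_mul_of_nonneg_left h1 (by positivity)
    have t2 : 8 * C₁ * C₂ * (ε ^ 3 * |A| ^ 3)
        ≤ 8 * C₁ * C₂ * |A| ^ 3 * (ε * Real.sqrt ε) := by
      calc 8 * C₁ * C₂ * (ε ^ 3 * |A| ^ 3) = 8 * C₁ * C₂ * |A| ^ 3 * ε ^ 3 := by ring
        _ ≤ 8 * C₁ * C₂ * |A| ^ 3 * (ε * Real.sqrt ε) :=
            mul_le_mul_of_nonneg_left h2 cA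
    refine le_trans hb ?_
    rw [hεA, h3, hK]
    have expand : (F'₀ ^ 2 * A ^ 2 + 8 * C₁ * C₂ * (|A| ^ 3 + γ * Real.sqrt γ * M₃))
          * (ε * Real.sqrt ε)
        = F'₀ ^ 2 * A ^ 2 * (ε * Real.sqrt ε) + 8 * C₁ * C₂ * |A| ^ 3 * (ε * Real.sqrt ε)
          + 8 * C₁ * C₂ * ((ε * Real.sqrt ε) * (γ * Real.sqrt γ)) * M₃ := by ring
    rw [expand]
    linarith [t1, t2]
  -- little-o of ε √ε versus ε
  have littleO : (fun ε : ℝ => ε * Real.sqrt ε) =o[nhdsWithin 0 (Set.Ioi 0)]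
      (fun ε : ℝ => ε) := by
    have h1 : (fun ε : ℝ => Real.sqrt ε) =o[nhdsWithin 0 (Set.Ioi 0)]
        (fun _ : ℝ => (1:ℝ)) := by
      rw [Asymptotics.isLittleO_one_iff]
      have := (Real.continuous_sqrt.tendsto 0).mono_left
        (nhdsWithin_le_nhds (s := Set.Ioi (0:ℝ)))
      simpa using this
    have h2 := h1.mul_isBigO (Asymptotics.isBigO_refl (fun ε : ℝ => ε)
      (nhdsWithin 0 (Set.Ioi 0)))
    simp only [one_mul] at h2
    refine h2.congr' ?_ (by rfl)
    filter_upwards with ε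
    ring
  exact bigO.trans_isLittleO littleO
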